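/- Let π/2 < β < π, and set z0 = (1, 0), v0 = (0, 1), zf = (cos β, sin β), vf = (−sin β, cos β), and t_f = β + 2π. Then there exists an admissible curve for the data (z0, v0, zf, vf, t_f) with maximum curvature strictly less than 1. Consequently, any admissible curve for this data with maximum curvature equal to 1 — in particular the path of type COC that follows the unit circle from z0 to zf with an inserted full unit-radius loop — is not a minimiser of Problem (P). (A COC path with endpoints separated by angle β on a unit circle can be optimal only if β ≤ π/2.) -/

import Mathlib

open Set MeasureTheory Real

noncomputable section

/-- Points of the Euclidean plane. -/
abbrev Pt : Type := EuclideanSpace ℝ (Fin 2)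

/-- The point of the plane with coordinates `(x, y)`. -/
def pt (x y : ℝ) : Pt := (WithLp.equiv 2 (Fin 2 → ℝ)).symm ![x, y]

/-- Rotation of the plane by `π/2`. -/
def J (v : Pt) : Pt := pt (-(v 1)) (v 0)

/-- `z`, with derivative `z'`, is an admissible curve on `[t1, t2]` for the oriented
endpoint data `(p0, u0)`, `(p1, u1)`: it is differentiable with Lipschitz (hence
continuous) derivative `z'`, has unit speed, and matches the endpoint data. -/
def AdmissibleOn (t1 t2 : ℝ) (p0 u0 p1 u1 : Pt) (z z' : ℝ → Pt) : Prop :=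
  (∀ t ∈ Icc t1 t2, HasDerivWithinAt z (z' t) (Icc t1 t2) t) ∧
  (∃ K : NNReal, LipschitzOnWith K z' (Icc t1 t2)) ∧
  (∀ t ∈ Icc t1 t2, ‖z' t‖ = 1) ∧
  z t1 = p0 ∧ z t2 = p1 ∧ z' t1 = u0 ∧ z' t2 = u1

/-- The maximum curvature of a unit-speed curve with derivative `z'` on the set `s`:
the least Lipschitz constant of `z'` on `s` (equivalently, the essential supremum
of the norm of the second derivative). -/
def maxCurvOn (s : Set ℝ) (z' : ℝ → Pt) : ℝ :=
  sInf {a : ℝ | 0 ≤ a ∧ LipschitzOnWith (Real.toNNReal a) z' s}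

/-- The piece `[s1, s2]` of the unit-speed curve with derivative `z'` is a circular
arc of signed curvature `ω`: `z'' = ω • J z'` a.e. there. -/
def IsArcOn (z' : ℝ → Pt) (ω s1 s2 : ℝ) : Prop :=
  ∀ᵐ t ∂volume, t ∈ Ioo s1 s2 → HasDerivAt z' (ω • J (z' t)) t

/-- The piece `[s1, s2]` of the unit-speed curve with derivative `z'` is a straight
line segment: `z'` is constant there. -/
def IsLineOn (z' : ℝ → Pt) (s1 s2 : ℝ) : Prop :=
  ∀ s ∈ Icc s1 s2, ∀ t ∈ Icc s1 s2, z' s = z' t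

/-- The piece `[s1, s2]` is a full circular loop of curvature `a`: a circular arc of
signed curvature `±a` whose turning angle is a positive integer multiple of `2π`. -/
def IsFullLoopOn (z' : ℝ → Pt) (a s1 s2 : ℝ) : Prop :=
  ∃ ω : ℝ, |ω| = a ∧ IsArcOn z' ω s1 s2 ∧ ∃ k : ℕ, 0 < k ∧ a * (s2 - s1) = 2 * π * k


namespace S14Aux

/-- Derivative rule for plane-valued curves built from coordinates. -/
lemma hasDerivAt_pt {X Y : ℝ → ℝ} {dx dy t : ℝ} (hX : HasDerivAt X dx t)
    (hY : HasDerivAt Y dy t) :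
    HasDerivAt (fun s => pt (X s) (Y s)) (pt dx dy) t := by
  have h : HasDerivAt (fun s => (fun i => (![X s, Y s] : Fin 2 → ℝ) i)) (![dx, dy]) t := by
    rw [hasDerivAt_pi]
    intro i
    fin_cases i
    · simpa using hX
    · simpa using hY
  exact ((EuclideanSpace.equiv (Fin 2) ℝ).symm.hasFDerivAt.comp_hasDerivAt t h :)

lemma norm_pt (x y : ℝ) : ‖pt x y‖ = Real.sqrt (x ^ 2 + y ^ 2) := by
  rw [EuclideanSpace.norm_eq]
  simp [Fin.sum_univ_two, pt, Real.norm_eq_abs, sq_abs]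

/-- Chord length bound: unit vectors at angles `x`, `y` are at distance at most `|x-y|`. -/
lemma chord_le (x y : ℝ) :
    dist (pt (Real.cos x) (Real.sin x)) (pt (Real.cos y) (Real.sin y)) ≤ |x - y| := by
  rw [EuclideanSpace.dist_eq]
  simp only [Fin.sum_univ_two, Real.dist_eq, sq_abs]
  have h : (Real.cos x - Real.cos y) ^ 2 + (Real.sin x - Real.sin y) ^ 2
      = 4 * Real.sin ((x - y) / 2) ^ 2 := by
    have h1 := Real.sin_sq_add_cos_sq x
    have h2 := Real.sin_sq_add_cos_sq y
    have hc : Real.cos (x - y) = Real.cos x * Real.cos y + Real.sin x * Real.sin y :=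
      Real.cos_sub x y
    have hs : Real.sin ((x - y) / 2) ^ 2 = 1 / 2 - Real.cos (x - y) / 2 := by
      have := Real.sin_sq_eq_half_sub ((x - y) / 2)
      rw [show 2 * ((x - y) / 2) = x - y by ring] at this
      linarith
    nlinarith
  rw [show ((pt (Real.cos x) (Real.sin x)) 0 - (pt (Real.cos y) (Real.sin y)) 0) ^ 2 +
      ((pt (Real.cos x) (Real.sin x)) 1 - (pt (Real.cos y) (Real.sin y)) 1) ^ 2
      = 4 * Real.sin ((x - y) / 2) ^ 2 from h]
  have h2 : Real.sqrt (4 * Real.sin ((x - y) / 2) ^ 2) = 2 * |Real.sin ((x - y) / 2)| := by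
    rw [show (4 : ℝ) * Real.sin ((x - y) / 2) ^ 2 = (2 * |Real.sin ((x - y) / 2)|) ^ 2 by
      rw [mul_pow, sq_abs]; ring]
    exact Real.sqrt_sq (by positivity)
  rw [h2]
  calc 2 * |Real.sin ((x - y) / 2)| ≤ 2 * |(x - y) / 2| := by
        have := Real.abs_sin_le_abs (x := (x - y) / 2); linarith
    _ = |x - y| := by rw [abs_div]; simp; ring

/-- The piecewise-linear "hat with tails" profile used for the tangent angle. -/
def m (p q t : ℝ) : ℝ := max (-t) (min (t - 2 * p) (2 * q - 2 * p - t))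

lemma m_left {p q t : ℝ} (ht : t ≤ p) : m p q t = -t := by
  apply max_eq_left
  exact (min_le_left _ _).trans (by linarith)

lemma m_mid {p q t : ℝ} (h1 : p ≤ t) (h2 : t ≤ q) : m p q t = t - 2 * p := by
  unfold m
  rw [min_eq_left (by linarith), max_eq_right (by linarith)]

lemma m_right {p q t : ℝ} (hpq : p ≤ q) (ht : q ≤ t) : m p q t = 2 * q - 2 * p - t := by
  unfold m
  rw [min_eq_right (by linarith), max_eq_right (by linarith)]

lemma m_lip (p q : ℝ) : LipschitzWith 1 (m p q) := by
  have l1 : LipschitzWith 1 (fun t : ℝ => -t) := by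
    apply LipschitzWith.of_dist_le_mul
    intro s t
    simp only [Real.dist_eq, NNReal.coe_one, one_mul]
    rw [show -s - -t = -(s - t) by ring, abs_neg]
  have l2 : LipschitzWith 1 (fun t : ℝ => t - 2 * p) := by
    apply LipschitzWith.of_dist_le_mul
    intro s t
    simp only [Real.dist_eq, NNReal.coe_one, one_mul]
    rw [show s - 2 * p - (t - 2 * p) = s - t by ring]
  have l3 : LipschitzWith 1 (fun t : ℝ => 2 * q - 2 * p - t) := by
    apply LipschitzWith.of_dist_le_mul
    intro s t
    simp only [Real.dist_eq, NNReal.coe_one, one_mul]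
    rw [show 2 * q - 2 * p - s - (2 * q - 2 * p - t) = -(s - t) by ring, abs_neg]
  have := l1.max (l2.min l3)
  rw [max_self, max_self] at this
  exact this

/-- Gluing a piecewise-defined function's derivative across two junctions. -/
lemma hasDerivAt_glue3 {p q : ℝ} (hpq : p < q) {F f g h : ℝ → ℝ} {d : ℝ → ℝ}
    (heq1 : ∀ s, s ≤ p → F s = f s)
    (heq2 : ∀ s, p ≤ s → s ≤ q → F s = g s)
    (heq3 : ∀ s, q ≤ s → F s = h s)
    (hf : ∀ s, s ≤ p → HasDerivAt f (d s) s)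
    (hg : ∀ s, p ≤ s → s ≤ q → HasDerivAt g (d s) s)
    (hh : ∀ s, q ≤ s → HasDerivAt h (d s) s) :
    ∀ t, HasDerivAt F (d t) t := by
  intro t
  rcases lt_trichotomy t p with h1 | h1 | h1
  · refine (hf t h1.le).congr_of_eventuallyEq ?_
    filter_upwards [Iio_mem_nhds h1] with s hs using heq1 s (le_of_lt hs)
  · subst h1
    have H1 : HasDerivWithinAt F (d t) (Iic t) t :=
      ((hf t le_rfl).hasDerivWithinAt).congr (fun s hs => heq1 s hs) (heq1 t le_rfl)
    have H2 : HasDerivWithinAt F (d t) (Icc t q) t :=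
      ((hg t le_rfl hpq.le).hasDerivWithinAt).congr (fun s hs => heq2 s hs.1 hs.2)
        (heq2 t le_rfl hpq.le)
    have H := H1.union H2
    have hset : Iic t ∪ Icc t q = Iic q := by
      ext s
      simp only [mem_union, mem_Iic, mem_Icc]
      constructor
      · rintro (hs | hs)
        · exact hs.trans hpq.le
        · exact hs.2
      · intro hs
        rcases le_total s t with hs' | hs'
        · exact Or.inl hs'
        · exact Or.inr ⟨hs', hs⟩
    rw [hset] at H
    exact H.hasDerivAt (Iic_mem_nhds hpq)
  · rcases lt_trichotomy t q with h2 | h2 | h2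
    · refine (hg t h1.le h2.le).congr_of_eventuallyEq ?_
      filter_upwards [Ioo_mem_nhds h1 h2] with s hs using heq2 s hs.1.le hs.2.le
    · subst h2
      have H1 : HasDerivWithinAt F (d t) (Icc p t) t :=
        ((hg t hpq.le le_rfl).hasDerivWithinAt).congr (fun s hs => heq2 s hs.1 hs.2)
          (heq2 t hpq.le le_rfl)
      have H2 : HasDerivWithinAt F (d t) (Ici t) t :=
        ((hh t le_rfl).hasDerivWithinAt).congr (fun s hs => heq3 s hs) (heq3 t le_rfl)
      have H := H1.union H2
      have hset : Icc p t ∪ Ici t = Ici p := by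
        ext s
        simp only [mem_union, mem_Icc, mem_Ici]
        constructor
        · rintro (hs | hs)
          · exact hs.1
          · exact hpq.le.trans hs
        · intro hs
          rcases le_total s t with hs' | hs'
          · exact Or.inl ⟨hs, hs'⟩
          · exact Or.inr hs'
      rw [hset] at H
      exact H.hasDerivAt (Ici_mem_nhds hpq)
    · refine (hh t h2.le).congr_of_eventuallyEq ?_
      filter_upwards [Ioi_mem_nhds h2] with s hs using heq3 s (le_of_lt hs)

/-! The explicit construction: a symmetric `CCC` curve with curvature `a < 1`. -/

/-- First switch time. -/
def tA (β a : ℝ) : ℝ := (a * (β + 2 * π) - β) / (4 * a)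

/-- Second switch time. -/
def tB (β a : ℝ) : ℝ := β + 2 * π - tA β a

/-- The tangent angle of the constructed curve. -/
def th (β a t : ℝ) : ℝ := π / 2 + a * m (tA β a) (tB β a) t

def CC (β a : ℝ) : ℝ := 1 + 1 / a - 2 * Real.cos (a * tA β a) / a
def DD (β a : ℝ) : ℝ := 2 * Real.sin (a * tA β a) / a
def EE (β a : ℝ) : ℝ := CC β a + 2 * Real.cos (a * tB β a - 2 * a * tA β a) / a
def FF (β a : ℝ) : ℝ := DD β a + 2 * Real.sin (a * tB β a - 2 * a * tA β a) / a

/-- First coordinate of the constructed curve. -/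
def XX (β a t : ℝ) : ℝ :=
  if t ≤ tA β a then 1 + (1 - Real.cos (a * t)) / a
  else if t ≤ tB β a then CC β a + Real.cos (a * t - 2 * a * tA β a) / a
  else EE β a - Real.cos (a * (2 * tB β a - 2 * tA β a - t)) / a

/-- Second coordinate of the constructed curve. -/
def YY (β a t : ℝ) : ℝ :=
  if t ≤ tA β a then Real.sin (a * t) / a
  else if t ≤ tB β a then DD β a + Real.sin (a * t - 2 * a * tA β a) / a
  else FF β a - Real.sin (a * (2 * tB β a - 2 * tA β a - t)) / a

/-- The constructed curve. -/
def w (β a : ℝ) (t : ℝ) : Pt := pt (XX β a t) (YY β a t)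

/-- Its derivative. -/
def w' (β a : ℝ) (t : ℝ) : Pt := pt (Real.cos (th β a t)) (Real.sin (th β a t))

set_option maxHeartbeats 1000000 in
lemma main (β a : ℝ) (hb1 : π / 2 < β) (hb2 : β < π)
    (ha1 : β / (β + 2 * π) < a) (ha2 : a < 1)
    (hg : 2 * Real.sin ((a * (β + 2 * π) + β) / 4) = (1 + a) * Real.sin (β / 2)) :
    AdmissibleOn 0 (β + 2 * π) (pt 1 0) (pt 0 1)
      (pt (Real.cos β) (Real.sin β)) (pt (-Real.sin β) (Real.cos β)) (w β a) (w' β a) ∧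
    LipschitzOnWith a.toNNReal (w' β a) (Icc 0 (β + 2 * π)) := by
  have hπ : (0 : ℝ) < π := Real.pi_pos
  have hb0 : 0 < β := lt_trans (by positivity) hb1
  set L : ℝ := β + 2 * π with hLdef
  have hL0 : 0 < L := by positivity
  have ha0 : 0 < a := lt_trans (by positivity) ha1
  have ha0' : a ≠ 0 := ne_of_gt ha0
  have haL : β < a * L := by
    rw [div_lt_iff₀ hL0] at ha1
    linarith
  have htA : tA β a = (a * L - β) / (4 * a) := rfl
  have htA0 : 0 < tA β a := by
    rw [htA]
    apply div_pos (by linarith) (by positivity)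
  have htB : tB β a = L - tA β a := rfl
  have htAmul : tA β a * (4 * a) = a * L - β := by rw [htA]; field_simp
  have htAB : tA β a < tB β a := by
    rw [htB]
    nlinarith [mul_pos ha0 hL0]
  have htBL : tB β a ≤ L := by
    rw [htB]; linarith
  have htALT : tA β a < L := lt_of_lt_of_le htAB htBL
  -- key argument identities
  have hPA : a * tA β a = (a * L - β) / 4 := by
    rw [htA]; field_simp
  have hPB : a * tB β a - 2 * a * tA β a = (a * L + 3 * β) / 4 := by
    rw [htB]
    linear_combination (-3 : ℝ) * hPA
  have hKey : a * (2 * tB β a - 2 * tA β a - L) = β := by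
    rw [htB]
    linear_combination (-4 : ℝ) * hPA
  -- angle piece values
  have th1 : ∀ s : ℝ, s ≤ tA β a → th β a s = π / 2 - a * s := by
    intro s hs
    rw [th, m_left hs]; ring
  have th2 : ∀ s : ℝ, tA β a ≤ s → s ≤ tB β a → th β a s = π / 2 + a * (s - 2 * tA β a) := by
    intro s hs1 hs2
    rw [th, m_mid hs1 hs2]
  have th3 : ∀ s : ℝ, tB β a ≤ s → th β a s = π / 2 + a * (2 * tB β a - 2 * tA β a - s) := by
    intro s hs
    rw [th, m_right htAB.le hs]
  -- junction values
  have jX1 : 1 + (1 - Real.cos (a * tA β a)) / a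
      = CC β a + Real.cos (a * tA β a - 2 * a * tA β a) / a := by
    rw [show a * tA β a - 2 * a * tA β a = -(a * tA β a) by ring, Real.cos_neg, CC]
    field_simp
    ring
  have jX2 : CC β a + Real.cos (a * tB β a - 2 * a * tA β a) / a
      = EE β a - Real.cos (a * (2 * tB β a - 2 * tA β a - tB β a)) / a := by
    rw [show a * (2 * tB β a - 2 * tA β a - tB β a) = a * tB β a - 2 * a * tA β a by ring, EE]
    ring
  have jY1 : Real.sin (a * tA β a) / a
      = DD β a + Real.sin (a * tA β a - 2 * a * tA β a) / a := by
    rw [show a * tA β a - 2 * a * tA β a = -(a * tA β a) by ring, Real.sin_neg, DD]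
    ring
  have jY2 : DD β a + Real.sin (a * tB β a - 2 * a * tA β a) / a
      = FF β a - Real.sin (a * (2 * tB β a - 2 * tA β a - tB β a)) / a := by
    rw [show a * (2 * tB β a - 2 * tA β a - tB β a) = a * tB β a - 2 * a * tA β a by ring, FF]
    ring
  -- branch equalities
  have eqX1 : ∀ s, s ≤ tA β a → XX β a s = 1 + (1 - Real.cos (a * s)) / a := by
    intro s hs; rw [XX, if_pos hs]
  have eqX2 : ∀ s, tA β a ≤ s → s ≤ tB β a →
      XX β a s = CC β a + Real.cos (a * s - 2 * a * tA β a) / a := by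
    intro s hs1 hs2
    by_cases h : s ≤ tA β a
    · have : s = tA β a := le_antisymm h hs1
      subst this
      rw [XX, if_pos h]
      exact jX1
    · rw [XX, if_neg h, if_pos hs2]
  have eqX3 : ∀ s, tB β a ≤ s →
      XX β a s = EE β a - Real.cos (a * (2 * tB β a - 2 * tA β a - s)) / a := by
    intro s hs
    have h1 : ¬ s ≤ tA β a := by linarith
    by_cases h2 : s ≤ tB β a
    · have : s = tB β a := le_antisymm h2 hs
      subst this
      rw [XX, if_neg h1, if_pos h2]
      exact jX2
    · rw [XX, if_neg h1, if_neg h2]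
  have eqY1 : ∀ s, s ≤ tA β a → YY β a s = Real.sin (a * s) / a := by
    intro s hs; rw [YY, if_pos hs]
  have eqY2 : ∀ s, tA β a ≤ s → s ≤ tB β a →
      YY β a s = DD β a + Real.sin (a * s - 2 * a * tA β a) / a := by
    intro s hs1 hs2
    by_cases h : s ≤ tA β a
    · have : s = tA β a := le_antisymm h hs1
      subst this
      rw [YY, if_pos h]
      exact jY1
    · rw [YY, if_neg h, if_pos hs2]
  have eqY3 : ∀ s, tB β a ≤ s →
      YY β a s = FF β a - Real.sin (a * (2 * tB β a - 2 * tA β a - s)) / a := by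
    intro s hs
    have h1 : ¬ s ≤ tA β a := by linarith
    by_cases h2 : s ≤ tB β a
    · have : s = tB β a := le_antisymm h2 hs
      subst this
      rw [YY, if_neg h1, if_pos h2]
      exact jY2
    · rw [YY, if_neg h1, if_neg h2]
  -- derivatives of the branch formulas
  have hinner1 : ∀ s : ℝ, HasDerivAt (fun t : ℝ => a * t) a s := by
    intro s
    simpa using (hasDerivAt_id s).const_mul a
  have hinner2 : ∀ s : ℝ, HasDerivAt (fun t : ℝ => a * t - 2 * a * tA β a) a s := by
    intro s
    simpa using (hinner1 s).sub_const (2 * a * tA β a)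
  have hinner3 : ∀ s : ℝ,
      HasDerivAt (fun t : ℝ => a * (2 * tB β a - 2 * tA β a - t)) (-a) s := by
    intro s
    have h0 : HasDerivAt (fun t : ℝ => 2 * tB β a - 2 * tA β a - t) (-1) s := by
      exact (hasDerivAt_id' s).const_sub (2 * tB β a - 2 * tA β a)
    have := h0.const_mul a
    simpa using this
  have hdX1 : ∀ s, s ≤ tA β a →
      HasDerivAt (fun t => 1 + (1 - Real.cos (a * t)) / a) (Real.cos (th β a s)) s := by
    intro s hs
    have h1 : HasDerivAt (fun t => 1 + (1 - Real.cos (a * t)) / a)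
        ((0 - -Real.sin (a * s) * a) / a) s :=
      (((hasDerivAt_const s (1 : ℝ)).sub ((hinner1 s).cos)).div_const a).const_add 1
    convert h1 using 1
    rw [th1 s hs, show π / 2 - a * s = π / 2 - a * s from rfl, Real.cos_pi_div_two_sub]
    field_simp
    ring
  have hdX2 : ∀ s, tA β a ≤ s → s ≤ tB β a →
      HasDerivAt (fun t => CC β a + Real.cos (a * t - 2 * a * tA β a) / a)
        (Real.cos (th β a s)) s := by
    intro s hs1 hs2
    have h1 : HasDerivAt (fun t => CC β a + Real.cos (a * t - 2 * a * tA β a) / a)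
        ((-Real.sin (a * s - 2 * a * tA β a) * a) / a) s :=
      (((hinner2 s).cos).div_const a).const_add (CC β a)
    convert h1 using 1
    rw [th2 s hs1 hs2, show π / 2 + a * (s - 2 * tA β a)
      = a * (s - 2 * tA β a) + π / 2 by ring, Real.cos_add_pi_div_two,
      show a * (s - 2 * tA β a) = a * s - 2 * a * tA β a by ring]
    field_simp
  have hdX3 : ∀ s, tB β a ≤ s →
      HasDerivAt (fun t => EE β a - Real.cos (a * (2 * tB β a - 2 * tA β a - t)) / a)
        (Real.cos (th β a s)) s := by
    intro s hs
    have h1 : HasDerivAt (fun t => EE β a - Real.cos (a * (2 * tB β a - 2 * tA β a - t)) / a)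
        (0 - (-Real.sin (a * (2 * tB β a - 2 * tA β a - s)) * -a) / a) s :=
      (hasDerivAt_const s (EE β a)).sub (((hinner3 s).cos).div_const a)
    convert h1 using 1
    rw [th3 s hs, show π / 2 + a * (2 * tB β a - 2 * tA β a - s)
      = a * (2 * tB β a - 2 * tA β a - s) + π / 2 by ring, Real.cos_add_pi_div_two]
    field_simp
    ring
  have hdY1 : ∀ s, s ≤ tA β a →
      HasDerivAt (fun t => Real.sin (a * t) / a) (Real.sin (th β a s)) s := by
    intro s hs
    have h1 : HasDerivAt (fun t => Real.sin (a * t) / a) ((Real.cos (a * s) * a) / a) s :=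
      ((hinner1 s).sin).div_const a
    convert h1 using 1
    rw [th1 s hs, Real.sin_pi_div_two_sub]
    field_simp
  have hdY2 : ∀ s, tA β a ≤ s → s ≤ tB β a →
      HasDerivAt (fun t => DD β a + Real.sin (a * t - 2 * a * tA β a) / a)
        (Real.sin (th β a s)) s := by
    intro s hs1 hs2
    have h1 : HasDerivAt (fun t => DD β a + Real.sin (a * t - 2 * a * tA β a) / a)
        ((Real.cos (a * s - 2 * a * tA β a) * a) / a) s :=
      (((hinner2 s).sin).div_const a).const_add (DD β a)
    convert h1 using 1
    rw [th2 s hs1 hs2, show π / 2 + a * (s - 2 * tA β a)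
      = a * (s - 2 * tA β a) + π / 2 by ring, Real.sin_add_pi_div_two,
      show a * (s - 2 * tA β a) = a * s - 2 * a * tA β a by ring]
    field_simp
  have hdY3 : ∀ s, tB β a ≤ s →
      HasDerivAt (fun t => FF β a - Real.sin (a * (2 * tB β a - 2 * tA β a - t)) / a)
        (Real.sin (th β a s)) s := by
    intro s hs
    have h1 : HasDerivAt (fun t => FF β a - Real.sin (a * (2 * tB β a - 2 * tA β a - t)) / a)
        (0 - (Real.cos (a * (2 * tB β a - 2 * tA β a - s)) * -a) / a) s :=
      (hasDerivAt_const s (FF β a)).sub (((hinner3 s).sin).div_const a)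
    convert h1 using 1
    rw [th3 s hs, show π / 2 + a * (2 * tB β a - 2 * tA β a - s)
      = a * (2 * tB β a - 2 * tA β a - s) + π / 2 by ring, Real.sin_add_pi_div_two]
    field_simp
    ring
  -- glued derivatives
  have hX : ∀ t, HasDerivAt (XX β a) (Real.cos (th β a t)) t :=
    hasDerivAt_glue3 htAB eqX1 eqX2 eqX3 hdX1 hdX2 hdX3
  have hY : ∀ t, HasDerivAt (YY β a) (Real.sin (th β a t)) t :=
    hasDerivAt_glue3 htAB eqY1 eqY2 eqY3 hdY1 hdY2 hdY3
  have hw : ∀ t, HasDerivAt (w β a) (w' β a t) t := by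
    intro t
    exact hasDerivAt_pt (hX t) (hY t)
  -- Lipschitz bound for w'
  have hlip : LipschitzOnWith a.toNNReal (w' β a) (Icc 0 L) := by
    rw [lipschitzOnWith_iff_dist_le_mul]
    intro s _ t _
    calc dist (w' β a s) (w' β a t) ≤ |th β a s - th β a t| := chord_le _ _
      _ = a * |m (tA β a) (tB β a) s - m (tA β a) (tB β a) t| := by
          rw [th, th, show π / 2 + a * m (tA β a) (tB β a) s
            - (π / 2 + a * m (tA β a) (tB β a) t)
            = a * (m (tA β a) (tB β a) s - m (tA β a) (tB β a) t) by ring, abs_mul,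
            abs_of_pos ha0]
      _ ≤ a * dist s t := by
          have := (m_lip (tA β a) (tB β a)).dist_le_mul s t
          simp only [NNReal.coe_one, one_mul] at this
          rw [Real.dist_eq] at this
          exact mul_le_mul_of_nonneg_left (by rwa [Real.dist_eq]) ha0.le
      _ = (a.toNNReal : ℝ) * dist s t := by rw [Real.coe_toNNReal a ha0.le]
  -- trig identities needed for the endpoint computation
  have hsb2 : 0 < Real.sin (β / 2) :=
    Real.sin_pos_of_pos_of_lt_pi (by linarith) (by linarith)
  have hcb : 1 - Real.cos β = 2 * Real.sin (β / 2) ^ 2 := by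
    have := Real.sin_sq_eq_half_sub (β / 2)
    rw [show 2 * (β / 2) = β by ring] at this
    linarith
  have hsb : Real.sin β = 2 * Real.sin (β / 2) * Real.cos (β / 2) := by
    rw [show β = 2 * (β / 2) by ring, Real.sin_two_mul]
    ring_nf
  have hcos : Real.cos ((a * L - β) / 4) - Real.cos ((a * L + 3 * β) / 4)
      = (1 + a) * Real.sin (β / 2) * Real.sin (β / 2) := by
    rw [Real.cos_sub_cos]
    rw [show ((a * L - β) / 4 + (a * L + 3 * β) / 4) / 2 = (a * L + β) / 4 by ring]
    rw [show ((a * L - β) / 4 - (a * L + 3 * β) / 4) / 2 = -(β / 2) by ring]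
    rw [Real.sin_neg]
    linear_combination Real.sin (β / 2) * hg
  have hsin : Real.sin ((a * L - β) / 4) + Real.sin ((a * L + 3 * β) / 4)
      = (1 + a) * Real.sin (β / 2) * Real.cos (β / 2) := by
    have h := Real.sin_sub_sin ((a * L - β) / 4) (-((a * L + 3 * β) / 4))
    rw [Real.sin_neg, show ((a * L - β) / 4 - -((a * L + 3 * β) / 4)) / 2
        = (a * L + β) / 4 by ring,
      show ((a * L - β) / 4 + -((a * L + 3 * β) / 4)) / 2 = -(β / 2) by ring,
      Real.cos_neg] at h
    linear_combination h + Real.cos (β / 2) * hg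
  -- endpoint values
  have hw0 : w β a 0 = pt 1 0 := by
    rw [w, eqX1 0 htA0.le, eqY1 0 htA0.le]
    norm_num
  have hwL : w β a L = pt (Real.cos β) (Real.sin β) := by
    rw [w, eqX3 L htBL, eqY3 L htBL, hKey, EE, FF, CC, DD, hPA, hPB]
    have hXv : 1 + 1 / a - 2 * Real.cos ((a * L - β) / 4) / a
        + 2 * Real.cos ((a * L + 3 * β) / 4) / a - Real.cos β / a = Real.cos β := by
      field_simp
      linear_combination (norm := ring_nf) -2 * hcos + (1 + a) * hcb
    have hYv : 2 * Real.sin ((a * L - β) / 4) / a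
        + 2 * Real.sin ((a * L + 3 * β) / 4) / a - Real.sin β / a = Real.sin β := by
      field_simp
      linear_combination (norm := ring_nf) 2 * hsin - (1 + a) * hsb
    rw [hXv, hYv]
  have hth0 : th β a 0 = π / 2 := by
    rw [th1 0 htA0.le]; ring
  have hthL : th β a L = π / 2 + β := by
    rw [th3 L htBL, hKey]
  have hw'0 : w' β a 0 = pt 0 1 := by
    rw [w', hth0, Real.cos_pi_div_two, Real.sin_pi_div_two]
  have hw'L : w' β a L = pt (-Real.sin β) (Real.cos β) := by
    rw [w', hthL, show π / 2 + β = β + π / 2 by ring, Real.cos_add_pi_div_two,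
      Real.sin_add_pi_div_two]
  refine ⟨⟨?_, ⟨a.toNNReal, hlip⟩, ?_, hw0, hwL, hw'0, hw'L⟩, hlip⟩
  · intro t _
    exact (hw t).hasDerivWithinAt
  · intro t _
    rw [w', norm_pt]
    rw [show Real.cos (th β a t) ^ 2 + Real.sin (th β a t) ^ 2 = 1 from
      Real.cos_sq_add_sin_sq _]
    exact Real.sqrt_one

end S14Aux

/-- Proposition 3 of the paper: a `COC` path with separation angle
`β > π/2` is not optimal. For endpoints on the unit circle separated by the angle
`β ∈ (π/2, π)`, with tangents along the circle and length `tf = β + 2π`, some admissible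
curve has maximum curvature strictly less than `1`; consequently no admissible curve of
maximum curvature `1` — in particular the `COC` path along the unit circle with an inserted
full unit loop — is a minimiser of Problem (P). -/
theorem stmt14 (β : ℝ) (hβ1 : π / 2 < β) (hβ2 : β < π) :
    (∃ w w' : ℝ → Pt,
        AdmissibleOn 0 (β + 2 * π) (pt 1 0) (pt 0 1)
          (pt (Real.cos β) (Real.sin β)) (pt (-Real.sin β) (Real.cos β)) w w' ∧
        maxCurvOn (Icc 0 (β + 2 * π)) w' < 1) ∧
      ∀ z z' : ℝ → Pt,
        AdmissibleOn 0 (β + 2 * π) (pt 1 0) (pt 0 1)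
          (pt (Real.cos β) (Real.sin β)) (pt (-Real.sin β) (Real.cos β)) z z' →
        maxCurvOn (Icc 0 (β + 2 * π)) z' = 1 →
          ¬ ∀ w w' : ℝ → Pt,
              AdmissibleOn 0 (β + 2 * π) (pt 1 0) (pt 0 1)
                (pt (Real.cos β) (Real.sin β)) (pt (-Real.sin β) (Real.cos β)) w w' →
                maxCurvOn (Icc 0 (β + 2 * π)) z' ≤ maxCurvOn (Icc 0 (β + 2 * π)) w' := by
  have hπ : (0 : ℝ) < π := Real.pi_pos
  have hb0 : 0 < β := lt_trans (by positivity) hβ1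
  have hL0 : (0 : ℝ) < β + 2 * π := by positivity
  have hsb2 : 0 < Real.sin (β / 2) :=
    Real.sin_pos_of_pos_of_lt_pi (by linarith) (by linarith)
  have hble : β / (β + 2 * π) ≤ 1 := by
    rw [div_le_one hL0]; linarith
  have hcont : ContinuousOn
      (fun x : ℝ => 2 * Real.sin ((x * (β + 2 * π) + β) / 4) - (1 + x) * Real.sin (β / 2))
      (Icc (β / (β + 2 * π)) 1) := by fun_prop
  have hxcancel : β / (β + 2 * π) * (β + 2 * π) = β := div_mul_cancel₀ _ (ne_of_gt hL0)
  have hglo : 0 < 2 * Real.sin ((β / (β + 2 * π) * (β + 2 * π) + β) / 4)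
      - (1 + β / (β + 2 * π)) * Real.sin (β / 2) := by
    rw [hxcancel, show (β + β) / 4 = β / 2 by ring]
    have hfrac : β / (β + 2 * π) < 1 := by
      rw [div_lt_one hL0]; linarith
    nlinarith [hsb2, hfrac]
  have hghi : 2 * Real.sin ((1 * (β + 2 * π) + β) / 4) - (1 + 1) * Real.sin (β / 2) < 0 := by
    rw [show (1 * (β + 2 * π) + β) / 4 = β / 2 + π / 2 by ring, Real.sin_add_pi_div_two]
    have h1 : Real.cos (β / 2) < Real.cos (π / 2 - β / 2) :=
      Real.cos_lt_cos_of_nonneg_of_le_pi (by linarith) (by linarith) (by linarith)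
    rw [Real.cos_pi_div_two_sub] at h1
    linarith
  obtain ⟨a, hamem, hga⟩ := intermediate_value_Icc' hble hcont ⟨le_of_lt hghi, le_of_lt hglo⟩
  have hga' : 2 * Real.sin ((a * (β + 2 * π) + β) / 4) - (1 + a) * Real.sin (β / 2) = 0 := hga
  have hg : 2 * Real.sin ((a * (β + 2 * π) + β) / 4) = (1 + a) * Real.sin (β / 2) := by
    linarith
  have ha1 : β / (β + 2 * π) < a := by
    rcases lt_or_eq_of_le hamem.1 with h | h
    · exact h
    · exfalso; rw [← h] at hga'; linarith
  have ha2 : a < 1 := by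
    rcases lt_or_eq_of_le hamem.2 with h | h
    · exact h
    · exfalso; rw [h] at hga'; linarith
  have ha0 : 0 < a := lt_trans (by positivity) ha1
  obtain ⟨hadm, hlip⟩ := S14Aux.main β a hβ1 hβ2 ha1 ha2 hg
  have hcurv : maxCurvOn (Icc 0 (β + 2 * π)) (S14Aux.w' β a) < 1 := by
    have hmem : a ∈ {c : ℝ |
        0 ≤ c ∧ LipschitzOnWith (Real.toNNReal c) (S14Aux.w' β a) (Icc 0 (β + 2 * π))} :=
      ⟨ha0.le, hlip⟩
    have hbdd : BddBelow {c : ℝ |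
        0 ≤ c ∧ LipschitzOnWith (Real.toNNReal c) (S14Aux.w' β a) (Icc 0 (β + 2 * π))} :=
      ⟨0, fun c hc => hc.1⟩
    have hle : maxCurvOn (Icc 0 (β + 2 * π)) (S14Aux.w' β a) ≤ a := csInf_le hbdd hmem
    linarith
  refine ⟨⟨S14Aux.w β a, S14Aux.w' β a, hadm, hcurv⟩, ?_⟩
  intro z z' hz hz1 hall
  have h := hall (S14Aux.w β a) (S14Aux.w' β a) hadm
  rw [hz1] at h
  linarith
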